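/- Let G be a finite group and K = x^G with K^n = D ∪ D⁻¹ for some n ≥ 2 and conjugacy class D. Then χ(x)^n + χ(x⁻¹)^n = χ(1)^{n−1}(χ(x^n) + χ(x^{−n})) for all irreducible characters χ of G. -/

import Mathlib

open Pointwise CategoryTheory

/-- The conjugacy class of `a` in `G`. -/
def conjClass (G : Type*) [Group G] (a : G) : Set G := {b | IsConj a b}

namespace Stmt19Aux

open MonoidAlgebra Module

set_option linter.unusedSectionVars false
open scoped Classical
variable {G : Type} [Group G] [Fintype G]

/-- The antipode of the group algebra. -/
noncomputable def S (f : MonoidAlgebra ℂ G) : MonoidAlgebra ℂ G :=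
  MonoidAlgebra.ofCoeff (Finsupp.equivMapDomain (Equiv.inv G) f.coeff)

lemma S_apply (f : MonoidAlgebra ℂ G) (z : G) : (S f).coeff z = f.coeff z⁻¹ := rfl

lemma S_single (a : G) (b : ℂ) : S (MonoidAlgebra.single a b) = MonoidAlgebra.single a⁻¹ b :=
  congrArg MonoidAlgebra.ofCoeff (Finsupp.equivMapDomain_single (Equiv.inv G) a b)

lemma S_add (f g : MonoidAlgebra ℂ G) : S (f + g) = S f + S g := by
  ext z; simp only [S_apply, MonoidAlgebra.coeff_add, Finsupp.add_apply]

lemma S_zero : S (0 : MonoidAlgebra ℂ G) = 0 := by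
  ext z; simp [S_apply]

lemma S_mul (f g : MonoidAlgebra ℂ G) : S (f * g) = S g * S f := by
  induction f using MonoidAlgebra.induction_linear with
  | zero => simp [S_zero]
  | add f₁ f₂ h₁ h₂ => rw [add_mul, S_add, S_add, mul_add, h₁, h₂]
  | single a b =>
    induction g using MonoidAlgebra.induction_linear with
    | zero => simp [S_zero]
    | add g₁ g₂ h₁ h₂ => rw [mul_add, S_add, S_add, add_mul, h₁, h₂]
    | single c e =>
      rw [MonoidAlgebra.single_mul_single, S_single, S_single, S_single,
        MonoidAlgebra.single_mul_single, mul_inv_rev, mul_comm e b]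

lemma S_one : S (1 : MonoidAlgebra ℂ G) = 1 := by
  have : (1 : MonoidAlgebra ℂ G) = MonoidAlgebra.single 1 1 := rfl
  rw [this, S_single, inv_one]

lemma S_pow (f : MonoidAlgebra ℂ G) (m : ℕ) : S (f ^ m) = S f ^ m := by
  induction m with
  | zero => simpa using S_one
  | succ m ih => rw [pow_succ, S_mul, ih, pow_succ']

lemma isConj_inv' {a b : G} (h : IsConj a b) : IsConj a⁻¹ b⁻¹ := by
  obtain ⟨c, hc⟩ := isConj_iff.1 h
  exact isConj_iff.2 ⟨c, by rw [← hc]; group⟩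

lemma isConj_inv_iff {a b : G} : IsConj a⁻¹ b ↔ IsConj a b⁻¹ :=
  ⟨fun h => by simpa using isConj_inv' h, fun h => by simpa using isConj_inv' h⟩

noncomputable def cl (x : G) : Finset G := (Set.toFinite (conjClass G x)).toFinset

lemma mem_cl {x z : G} : z ∈ cl x ↔ IsConj x z := by
  simp [cl, Set.Finite.mem_toFinset, conjClass, Set.mem_setOf_eq]

lemma coe_cl (x : G) : (cl x : Set G) = conjClass G x := by
  ext z; simp [mem_cl, conjClass]

lemma card_cl_inv (x : G) : (cl x⁻¹).card = (cl x).card := by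
  apply Finset.card_nbij' (i := fun z => z⁻¹) (j := fun z => z⁻¹)
  · intro z hz
    rw [Finset.mem_coe, mem_cl] at hz ⊢
    exact isConj_inv_iff.1 hz
  · intro z hz
    rw [Finset.mem_coe, mem_cl] at hz ⊢
    exact isConj_inv' hz
  · intro z _; simp
  · intro z _; simp

noncomputable def a (x : G) : MonoidAlgebra ℂ G := ∑ g ∈ cl x, MonoidAlgebra.single g 1

lemma a_apply (x z : G) : (a x).coeff z = if z ∈ cl x then 1 else 0 := by
  classical
  rw [a, MonoidAlgebra.coeff_sum, Finsupp.finset_sum_apply]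
  simp [Finsupp.single_apply]

lemma S_a (x : G) : S (a x) = a x⁻¹ := by
  ext z
  rw [S_apply, a_apply, a_apply]
  exact if_congr (by rw [mem_cl, mem_cl, ← isConj_inv_iff]) rfl rfl

lemma a_comm (x h : G) :
    MonoidAlgebra.single h (1 : ℂ) * a x = a x * MonoidAlgebra.single h 1 := by
  rw [a, Finset.mul_sum, Finset.sum_mul]
  simp only [MonoidAlgebra.single_mul_single, one_mul, mul_one]
  apply Finset.sum_nbij' (i := fun g => h * g * h⁻¹) (j := fun g => h⁻¹ * g * h)
  · intro g hg
    rw [mem_cl] at hg ⊢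
    exact hg.trans (isConj_iff.2 ⟨h, rfl⟩)
  · intro g hg
    rw [mem_cl] at hg ⊢
    exact hg.trans (isConj_iff.2 ⟨h⁻¹, by group⟩)
  · intro g _; group
  · intro g _; group
  · intro g _
    congr 1
    group

lemma support_a (x : G) {z : G} (hz : z ∈ (a x).coeff.support) : z ∈ cl x := by
  rw [Finsupp.mem_support_iff, a_apply] at hz
  by_contra hmem
  simp [hmem] at hz

lemma support_a_pow (x : G) (m : ℕ) {z : G} (hz : z ∈ ((a x) ^ m).coeff.support) :
    z ∈ (conjClass G x) ^ m := by
  induction m generalizing z with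
  | zero =>
    rw [pow_zero] at hz
    have h1 : z = 1 := by
      have := Finsupp.support_single_subset (α := G) (M := ℂ) (a := 1) (b := 1) hz
      simpa using this
    rw [pow_zero, h1]
    exact Set.mem_one.2 rfl
  | succ m ih =>
    rw [pow_succ] at hz
    obtain ⟨y, hy, w, hw, rfl⟩ := Finset.mem_mul.1 (MonoidAlgebra.support_coeff_mul_subset _ _ hz)
    rw [pow_succ]
    exact Set.mul_mem_mul (ih hy) (by rw [← coe_cl]; exact support_a x hw)

/-- The augmentation map. -/
noncomputable def eps : MonoidAlgebra ℂ G →ₐ[ℂ] ℂ := MonoidAlgebra.lift ℂ ℂ G 1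

lemma eps_eq (f : MonoidAlgebra ℂ G) : eps f = ∑ z : G, f.coeff z := by
  rw [eps, MonoidAlgebra.lift_apply, Finsupp.sum_fintype]
  · simp
  · intro; simp

lemma eps_a (x : G) : eps (a x) = ((cl x).card : ℂ) := by
  rw [eps_eq]
  simp [a_apply]

lemma sum_coeff_pow (x : G) (m : ℕ) :
    ∑ z : G, ((a x) ^ m).coeff z = ((cl x).card : ℂ) ^ m := by
  rw [← eps_eq, map_pow, eps_a]

variable (V : FDRep ℂ G)

lemma trace_asAlgebraHom (f : MonoidAlgebra ℂ G) :
    LinearMap.trace ℂ V (Representation.asAlgebraHom V.ρ f) = ∑ z : G, f.coeff z * V.character z := by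
  rw [Representation.asAlgebraHom_def, MonoidAlgebra.lift_apply, Finsupp.sum_fintype]
  · rw [map_sum]
    refine Finset.sum_congr rfl fun z _ => ?_
    rw [map_smul, smul_eq_mul]
    rfl
  · intro; simp

lemma char_isConj {g h' : G} (hc : IsConj g h') : V.character g = V.character h' := by
  obtain ⟨c, hcc⟩ := isConj_iff.1 hc
  rw [← hcc, FDRep.char_conj]

lemma schur_scalar [Simple V] (x : G) :
    ∃ c : ℂ, Representation.asAlgebraHom V.ρ (a x) = c • 1 := by
  have hcomm : ∀ g : G,
      (V.ρ g) * (Representation.asAlgebraHom V.ρ (a x)) =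
        (Representation.asAlgebraHom V.ρ (a x)) * (V.ρ g) := by
    intro g
    have h1 := congrArg (Representation.asAlgebraHom V.ρ) (a_comm x g)
    rw [map_mul, map_mul, Representation.asAlgebraHom_single_one] at h1
    exact h1
  let φ : V ⟶ V := ⟨InducedCategory.homMk (ModuleCat.ofHom (Representation.asAlgebraHom V.ρ (a x))),
    fun g => by ext v; exact LinearMap.congr_fun (hcomm g).symm v⟩
  obtain ⟨c, hc⟩ := endomorphism_simple_eq_smul_id ℂ φ
  refine ⟨c, ?_⟩
  have h2 := congrArg Action.Hom.hom hc
  rw [Action.smul_hom] at h2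
  ext v
  exact (congrArg (fun f => f.hom.hom v) h2).symm

lemma key [Simple V] (x : G) (m : ℕ) (hm : 1 ≤ m) :
    ((cl x).card : ℂ) ^ m * V.character x ^ m =
      V.character 1 ^ (m - 1) * ∑ z : G, ((a x) ^ m).coeff z * V.character z := by
  obtain ⟨c, hc⟩ := schur_scalar V x
  have htr1 : LinearMap.trace ℂ V (Representation.asAlgebraHom V.ρ (a x)) =
      c * V.character 1 := by
    rw [hc, map_smul, smul_eq_mul, LinearMap.trace_one, FDRep.char_one]
  have hsum1 : ∑ z : G, (a x).coeff z * V.character z = ((cl x).card : ℂ) * V.character x := by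
    rw [Finset.sum_congr rfl fun z _ => by rw [a_apply, ite_mul, zero_mul, one_mul]]
    rw [Finset.sum_ite_mem, Finset.univ_inter]
    rw [Finset.sum_congr rfl fun z hz => (char_isConj V (mem_cl.1 hz)).symm]
    rw [Finset.sum_const, nsmul_eq_mul]
  have h1 : c * V.character 1 = ((cl x).card : ℂ) * V.character x := by
    rw [← htr1, trace_asAlgebraHom, hsum1]
  have h2 : ∑ z : G, ((a x) ^ m).coeff z * V.character z = c ^ m * V.character 1 := by
    rw [← trace_asAlgebraHom, map_pow, hc, smul_pow, one_pow, map_smul, smul_eq_mul,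
      LinearMap.trace_one, FDRep.char_one]
  rw [h2, ← mul_pow, ← h1, mul_pow]
  have hm' : m - 1 + 1 = m := Nat.succ_pred_eq_of_pos hm
  rw [← hm', Nat.add_sub_cancel, pow_succ, pow_succ]
  ring

end Stmt19Aux

open Stmt19Aux

theorem stmt19 {G : Type} [Group G] [Fintype G] (x d : G) (n : ℕ) (hn : 2 ≤ n)
    (h : (conjClass G x) ^ n = conjClass G d ∪ (conjClass G d)⁻¹) :
    ∀ (V : FDRep ℂ G), Simple V →
      V.character x ^ n + V.character x⁻¹ ^ n =
        V.character 1 ^ (n - 1) * (V.character (x ^ n) + V.character (x ^ n)⁻¹) := by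
  intro V hV
  haveI := hV
  classical
  have hn1 : 1 ≤ n := le_trans one_le_two hn
  have pair : ∀ z : G, z ∈ conjClass G d ∪ (conjClass G d)⁻¹ →
      V.character z + V.character z⁻¹ = V.character d + V.character d⁻¹ := by
    intro z hz
    rcases hz with hz | hz
    · have h1 : IsConj d z := hz
      rw [← char_isConj V h1, ← char_isConj V (isConj_inv' h1)]
    · have h1 : IsConj d z⁻¹ := Set.mem_inv.1 hz
      have h2 := isConj_inv' h1
      rw [inv_inv] at h2
      rw [← char_isConj V h1, ← char_isConj V h2, add_comm]
  have hxn : x ^ n ∈ conjClass G d ∪ (conjClass G d)⁻¹ := by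
    rw [← h]; exact Set.pow_mem_pow (IsConj.refl x)
  have pairn := pair _ hxn
  have kx := key V x n hn1
  have ky := key V x⁻¹ n hn1
  rw [card_cl_inv] at ky
  have hcoef : ∀ z : G, ((a x⁻¹ : MonoidAlgebra ℂ G) ^ n).coeff z
      = ((a x : MonoidAlgebra ℂ G) ^ n).coeff z⁻¹ := by
    intro z
    rw [← S_a, ← S_pow, S_apply]
  have hy' : ∑ z : G, ((a x⁻¹ : MonoidAlgebra ℂ G) ^ n).coeff z * V.character z
      = ∑ z : G, ((a x : MonoidAlgebra ℂ G) ^ n).coeff z * V.character z⁻¹ := by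
    rw [Finset.sum_congr rfl fun z _ => by rw [hcoef]]
    exact Fintype.sum_equiv (Equiv.inv G) _ _ (fun z => by simp)
  have hsum : (∑ z : G, ((a x : MonoidAlgebra ℂ G) ^ n).coeff z * V.character z)
        + ∑ z : G, ((a x : MonoidAlgebra ℂ G) ^ n).coeff z * V.character z⁻¹
      = ((cl (G := G) x).card : ℂ) ^ n * (V.character d + V.character d⁻¹) := by
    rw [← Finset.sum_add_distrib]
    have key2 : ∀ z : G, ((a x : MonoidAlgebra ℂ G) ^ n).coeff z * V.character z
          + ((a x : MonoidAlgebra ℂ G) ^ n).coeff z * V.character z⁻¹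
        = ((a x : MonoidAlgebra ℂ G) ^ n).coeff z * (V.character d + V.character d⁻¹) := by
      intro z
      by_cases hz : ((a x : MonoidAlgebra ℂ G) ^ n).coeff z = 0
      · rw [hz]; ring
      · have hzs : z ∈ ((a x : MonoidAlgebra ℂ G) ^ n).coeff.support := Finsupp.mem_support_iff.2 hz
        have hmem := support_a_pow x n hzs
        rw [h] at hmem
        rw [← mul_add, pair z hmem]
    rw [Finset.sum_congr rfl fun z _ => key2 z, ← Finset.sum_mul, sum_coeff_pow, mul_comm]
  have hk : ((cl (G := G) x).card : ℂ) ^ n ≠ 0 := by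
    apply pow_ne_zero
    have hx : x ∈ cl x := mem_cl.2 (IsConj.refl x)
    exact_mod_cast Finset.card_ne_zero_of_mem hx
  apply mul_left_cancel₀ hk
  rw [mul_add, kx, ky, ← mul_add, hy', hsum, pairn]
  ring
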